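/- Let c₁, c₂ ≥ 0 with c₁ + c₂ > 0, let a ∈ ℝ, and define ψ : ℝ → ℂ by ψ(θ) = −(π/2)(c₁+c₂)θ − i(c₁−c₂)θ log θ + i a (c₁−c₂)θ for θ > 0, ψ(0) = 0, and ψ(−θ) = conjugate of ψ(θ) for θ > 0. Suppose that for each s > 0, μ_s is a Borel probability measure on ℝ whose characteristic function equals θ ↦ exp(s ψ(θ)). Then there exists a constant c > 0 (depending only on c₁, c₂, a) such that for all s > 0 and all x > 0, μ_s({ y ∈ ℝ : |y| > x }) ≤ c ( s x^{-1} + s² x^{-2} + s² x^{-2} (log x)² ). -/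

import Mathlib

open MeasureTheory Real

lemma aux_cos_int (P : Measure ℝ) [IsProbabilityMeasure P] (θ : ℝ) :
    Integrable (fun y : ℝ => Real.cos (θ * y)) P := by
  refine Integrable.mono' (integrable_const (1:ℝ)) ?_ ?_
  · exact (Real.continuous_cos.comp (continuous_const.mul continuous_id)).aestronglyMeasurable
  · filter_upwards with y
    simpa using abs_cos_le_one (θ * y)

lemma aux_one_sub_cos_int (P : Measure ℝ) [IsProbabilityMeasure P] (θ : ℝ) :
    Integrable (fun y : ℝ => 1 - Real.cos (θ * y)) P :=
  (integrable_const 1).sub (aux_cos_int P θ)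

/-- Truncation-type tail bound. -/
lemma tail_core (P : Measure ℝ) [IsProbabilityMeasure P] (x : ℝ) (hx : 0 < x) (M : ℝ)
    (hbound : ∀ θ ∈ Set.Ioc (0:ℝ) (2/x), ∫ y, (1 - Real.cos (θ * y)) ∂P ≤ M) :
    (P {y : ℝ | x < |y|}).toReal ≤ 2 * M := by
  set u := 2/x with hu
  have hu0 : 0 < u := by positivity
  have hnn : ∀ θ y : ℝ, 0 ≤ 1 - Real.cos (θ * y) := fun θ y => by
    nlinarith [Real.cos_le_one (θ * y)]
  have hM : 0 ≤ M := by
    refine le_trans ?_ (hbound u ⟨hu0, le_refl u⟩)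
    exact integral_nonneg fun y => hnn u y
  set A : Set ℝ := {y : ℝ | x < |y|} with hA
  have hAm : MeasurableSet A := measurableSet_lt measurable_const measurable_id.abs
  -- inner θ-integral computation
  have inner_eq : ∀ y : ℝ, y ≠ 0 →
      ∫ θ in Set.Ioc (0:ℝ) u, (1 - Real.cos (θ * y)) = u - Real.sin (u * y) / y := by
    intro y hy
    rw [← intervalIntegral.integral_of_le hu0.le]
    have h2 : (∫ θ in (0:ℝ)..u, Real.cos (θ * y)) = Real.sin (u * y) / y := by
      rw [intervalIntegral.integral_comp_mul_right Real.cos hy]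
      simp [integral_cos, div_eq_inv_mul]
    have hci : IntervalIntegrable (fun θ => Real.cos (θ * y)) volume 0 u :=
      (Real.continuous_cos.comp (continuous_id.mul continuous_const)).intervalIntegrable 0 u
    rw [intervalIntegral.integral_sub intervalIntegrable_const hci, h2]
    simp
  have key : ENNReal.ofReal (u/2) * P A ≤ ENNReal.ofReal M * ENNReal.ofReal u := by
    have meas : Measurable fun p : ℝ × ℝ => ENNReal.ofReal (1 - Real.cos (p.1 * p.2)) := by
      apply Measurable.ennreal_ofReal
      exact (continuous_const.sub (Real.continuous_cos.comp
        (continuous_fst.mul continuous_snd))).measurable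
    calc ENNReal.ofReal (u/2) * P A = ∫⁻ _ in A, ENNReal.ofReal (u/2) ∂P := by
            rw [setLIntegral_const]
      _ ≤ ∫⁻ y in A, (∫⁻ θ in Set.Ioc (0:ℝ) u, ENNReal.ofReal (1 - Real.cos (θ * y))) ∂P := by
            refine setLIntegral_mono' hAm ?_
            intro y hy
            have hy0 : y ≠ 0 := by
              intro h; rw [hA] at hy; simp [h] at hy; linarith
            have hint : IntegrableOn (fun θ => 1 - Real.cos (θ * y)) (Set.Ioc 0 u) volume :=
              ((continuous_const.sub (Real.continuous_cos.comp
                (continuous_id.mul continuous_const))).integrableOn_Ioc)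
            rw [← ofReal_integral_eq_lintegral_ofReal hint
              (Filter.Eventually.of_forall fun θ => hnn θ y)]
            apply ENNReal.ofReal_le_ofReal
            rw [inner_eq y hy0]
            have hyx : x < |y| := hy
            have h1 : Real.sin (u * y) / y ≤ 1 / |y| := by
              calc Real.sin (u * y) / y ≤ |Real.sin (u * y) / y| := le_abs_self _
                _ = |Real.sin (u * y)| / |y| := abs_div _ _
                _ ≤ 1 / |y| := by
                    apply div_le_div_of_nonneg_right ?_ ?_ |>.trans_eq rfl
                    · exact abs_sin_le_one _
                    · positivity
            have h2 : (1:ℝ) / |y| ≤ 1 / x := by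
              apply one_div_le_one_div_of_le hx hyx.le
            have h3 : (1:ℝ)/x = u/2 := by rw [hu]; ring
            linarith
      _ ≤ ∫⁻ y, (∫⁻ θ in Set.Ioc (0:ℝ) u, ENNReal.ofReal (1 - Real.cos (θ * y))) ∂P :=
            setLIntegral_le_lintegral _ _
      _ = ∫⁻ θ in Set.Ioc (0:ℝ) u, (∫⁻ y, ENNReal.ofReal (1 - Real.cos (θ * y)) ∂P) := by
            exact lintegral_lintegral_swap (f := fun y θ => ENNReal.ofReal (1 - Real.cos (θ * y)))
              ((meas.comp measurable_swap).aemeasurable)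
      _ ≤ ∫⁻ _ in Set.Ioc (0:ℝ) u, ENNReal.ofReal M := by
            refine setLIntegral_mono' measurableSet_Ioc ?_
            intro θ hθ
            rw [← ofReal_integral_eq_lintegral_ofReal (aux_one_sub_cos_int P θ)
              (Filter.Eventually.of_forall fun y => hnn θ y)]
            exact ENNReal.ofReal_le_ofReal (hbound θ hθ)
      _ = ENNReal.ofReal M * ENNReal.ofReal u := by
            rw [setLIntegral_const, Real.volume_Ioc, sub_zero]
  have hfin : P A ≠ ⊤ := measure_ne_top P A
  have key2 : (ENNReal.ofReal (u/2) * P A).toReal ≤ (ENNReal.ofReal M * ENNReal.ofReal u).toReal := by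
    refine ENNReal.toReal_mono ?_ key
    exact ENNReal.mul_ne_top ENNReal.ofReal_ne_top ENNReal.ofReal_ne_top
  rw [ENNReal.toReal_mul, ENNReal.toReal_mul, ENNReal.toReal_ofReal (by positivity),
    ENNReal.toReal_ofReal hM, ENNReal.toReal_ofReal hu0.le] at key2
  nlinarith [ENNReal.toReal_nonneg (a := P A)]

set_option maxHeartbeats 1000000 in
theorem stmt_14 (c₁ c₂ a : ℝ) (hc₁ : 0 ≤ c₁) (hc₂ : 0 ≤ c₂) (hsum : 0 < c₁ + c₂)
    (ψ : ℝ → ℂ)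
    (hψpos : ∀ θ > (0:ℝ), ψ θ =
      ((-(π / 2) * (c₁ + c₂) * θ : ℝ) : ℂ)
        - Complex.I * (((c₁ - c₂) * θ * Real.log θ : ℝ) : ℂ)
        + Complex.I * ((a * (c₁ - c₂) * θ : ℝ) : ℂ))
    (hψ0 : ψ 0 = 0)
    (hψneg : ∀ θ > (0:ℝ), ψ (-θ) = starRingEnd ℂ (ψ θ))
    (μ : ℝ → Measure ℝ) (hprob : ∀ s > (0:ℝ), IsProbabilityMeasure (μ s))
    (hchar : ∀ s > (0:ℝ), ∀ θ : ℝ,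
      ∫ x, Complex.exp (Complex.I * θ * x) ∂(μ s) = Complex.exp ((s : ℂ) * ψ θ)) :
    ∃ c > (0:ℝ), ∀ s > (0:ℝ), ∀ x > (0:ℝ),
      (μ s {y : ℝ | x < |y|}).toReal ≤
        c * (s * x⁻¹ + s ^ 2 * x ^ (-(2:ℝ)) + s ^ 2 * x ^ (-(2:ℝ)) * (Real.log x) ^ 2) := by
  have hK1 : 0 < π/2*(c₁+c₂) := mul_pos (by positivity) hsum
  set K1 := π/2*(c₁+c₂) with hK1def
  set K2 := (c₁-c₂)^2 with hK2def
  clear_value K1 K2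
  have hK2 : 0 ≤ K2 := hK2def ▸ sq_nonneg (c₁-c₂)
  refine ⟨4*K1 + 8*K2*(1+2*(a - Real.log 2)^2) + 16*K2 + 1,
    by nlinarith [sq_nonneg (a - Real.log 2)], ?_⟩
  intro s hs x hx
  haveI := hprob s hs
  set u := 2/x with hu
  have hu0 : 0 < u := by positivity
  clear_value u
  set M := s*K1*u + s^2*K2*u^2*(1+(a - Real.log u)^2) with hMdef
  clear_value M
  have hbound : ∀ θ ∈ Set.Ioc (0:ℝ) u, ∫ y, (1 - Real.cos (θ*y)) ∂(μ s) ≤ M := by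
    intro θ hθ
    obtain ⟨hθ0, hθu⟩ := hθ
    have hexp_int : Integrable (fun y : ℝ => Complex.exp (Complex.I * θ * y)) (μ s) := by
      refine Integrable.mono' (integrable_const (1:ℝ)) ?_ ?_
      · apply Continuous.aestronglyMeasurable
        exact Complex.continuous_exp.comp (by continuity)
      · filter_upwards with y
        rw [Complex.norm_exp]
        simp [Complex.mul_re]
    have hre : (∫ y, Complex.exp (Complex.I * θ * y) ∂(μ s)).re
        = ∫ y, Real.cos (θ*y) ∂(μ s) := by
      rw [← RCLike.re_to_complex, ← integral_re hexp_int]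
      congr 1; funext y
      simp [Complex.exp_re, Complex.mul_re, Complex.mul_im]
    have e1 : ∫ y, (1 - Real.cos (θ*y)) ∂(μ s)
        = 1 - (Complex.exp ((s:ℂ) * ψ θ)).re := by
      rw [integral_sub (integrable_const 1) (aux_cos_int (μ s) θ), ← hre, hchar s hs θ]
      simp
    set R := -(π / 2) * (c₁ + c₂) * θ with hR
    set B := s * (a * (c₁ - c₂) * θ - (c₁ - c₂) * θ * Real.log θ) with hB
    clear_value R B
    have hz : (s:ℂ) * ψ θ = Complex.I * (B:ℂ) + ((s*R : ℝ):ℂ) := by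
      rw [hψpos θ hθ0, hB, hR]
      push_cast
      ring
    have e2 : (Complex.exp ((s:ℂ) * ψ θ)).re = Real.exp (s * R) * Real.cos B := by
      rw [hz, Complex.exp_re]
      simp [Complex.add_re, Complex.add_im, Complex.mul_re, Complex.mul_im]
    rw [e1, e2]
    have hA0 : s * R ≤ 0 := by
      rw [hR]
      have : 0 ≤ (π/2) * (c₁+c₂) * θ := by positivity
      nlinarith [hs.le]
    have h1 : 1 - Real.exp (s*R) ≤ -(s*R) := by nlinarith [Real.add_one_le_exp (s*R)]
    have h2 : Real.exp (s*R) ≤ 1 := by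
      rw [← Real.exp_zero]; exact Real.exp_le_exp.mpr hA0
    have h3 : (0:ℝ) ≤ Real.cos B - (1 - B^2/2) := by
      nlinarith [Real.one_sub_sq_div_two_le_cos (x := B)]
    have step : 1 - Real.exp (s*R) * Real.cos B ≤ -(s*R) + B^2/2 := by
      nlinarith [Real.exp_pos (s*R), mul_nonneg (Real.exp_pos (s*R)).le h3,
        Real.cos_le_one B]
    have hRb : -(s*R) ≤ s*K1*u := by
      have he : -(s*R) = s*K1*θ := by rw [hR, hK1def]; ring
      have h := mul_le_mul_of_nonneg_left hθu (mul_nonneg hs.le hK1.le)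
      rw [he]; linarith
    have hw0 : 0 ≤ Real.log u - Real.log θ := sub_nonneg.mpr (Real.log_le_log hθ0 hθu)
    have h4 : θ * (Real.log u - Real.log θ) ≤ u := by
      have hd : Real.log u - Real.log θ = Real.log (u/θ) := (Real.log_div hu0.ne' hθ0.ne').symm
      have hlb := Real.log_le_sub_one_of_pos (show 0 < u/θ by positivity)
      rw [hd]
      calc θ * Real.log (u/θ) ≤ θ * (u/θ - 1) := by nlinarith
        _ = u - θ := by field_simp
        _ ≤ u := by linarith
    have h5 : θ^2 * (a - Real.log θ)^2 ≤ 2*u^2 + 2*u^2*(a - Real.log u)^2 := by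
      have hvw : a - Real.log θ = (a - Real.log u) + (Real.log u - Real.log θ) := by ring
      have hq1 : θ^2 * (Real.log u - Real.log θ)^2 ≤ u^2 := by
        have h0 : 0 ≤ θ * (Real.log u - Real.log θ) := mul_nonneg hθ0.le hw0
        nlinarith
      have hq2 : θ^2 * (a - Real.log u)^2 ≤ u^2 * (a - Real.log u)^2 := by
        have : θ^2 ≤ u^2 := by nlinarith
        nlinarith [sq_nonneg (a - Real.log u)]
      nlinarith [sq_nonneg ((a - Real.log u) - (Real.log u - Real.log θ)), sq_nonneg θ,
        mul_nonneg (sq_nonneg θ) (sq_nonneg ((a - Real.log u) - (Real.log u - Real.log θ)))]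
    have hBsq : B^2/2 ≤ s^2*K2*u^2*(1+(a - Real.log u)^2) := by
      have hBe : B^2 = s^2 * K2 * (θ^2 * (a - Real.log θ)^2) := by
        rw [hB, hK2def]; ring
      have hc0 : (0:ℝ) ≤ s^2*K2 := mul_nonneg (sq_nonneg s) hK2
      have h6 := mul_le_mul_of_nonneg_left h5 hc0
      rw [hBe]
      linarith
    rw [hMdef]
    linarith
  rw [hu] at hbound
  have tb := tail_core (μ s) x hx M hbound
  have hG : x ^ (-(2:ℝ)) = (x^2)⁻¹ := by
    rw [Real.rpow_neg hx.le]
    congr 1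
    rw [show (2:ℝ) = ((2:ℕ):ℝ) by norm_num, Real.rpow_natCast]
  rw [hG]
  set L := Real.log x with hL
  set G := (x^2)⁻¹ with hGdef
  clear_value L G
  have hGpos : 0 < G := by rw [hGdef]; positivity
  have hlogu : Real.log u = Real.log 2 - L := by rw [hu, hL]; exact Real.log_div two_ne_zero hx.ne'
  have hux : u = 2*x⁻¹ := by rw [hu]; ring
  have hu2 : u^2 = 4*G := by
    rw [hGdef, hu]
    field_simp
    norm_num
  have hsq : (a - Real.log u)^2 ≤ 2*(a - Real.log 2)^2 + 2*L^2 := by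
    rw [hlogu]
    nlinarith [sq_nonneg ((a - Real.log 2) - L)]
  set p := s*x⁻¹ with hp
  set q := s^2*G with hq
  set r := s^2*G*L^2 with hr
  clear_value p q r
  have hp0 : 0 ≤ p := by rw [hp]; positivity
  have hq0 : 0 ≤ q := by rw [hq]; positivity
  have hr0 : 0 ≤ r := by rw [hr]; positivity
  have h2M : 2*M ≤ 4*K1*p + 8*K2*(1+2*(a - Real.log 2)^2)*q + 16*K2*r := by
    rw [hMdef, hp, hq, hr]
    have e1 : s*K1*u = 2*K1*(s*x⁻¹) := by rw [hux]; ring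
    have e2 : s^2*K2*u^2*(1+(a - Real.log u)^2)
        ≤ s^2*K2*(4*G)*(1 + (2*(a - Real.log 2)^2 + 2*L^2)) := by
      rw [hu2]
      have hc0 : 0 ≤ s^2*K2*(4*G) := by positivity
      have := mul_le_mul_of_nonneg_left (by linarith [hsq] :
        1+(a - Real.log u)^2 ≤ 1 + (2*(a - Real.log 2)^2 + 2*L^2)) hc0
      linarith
    linarith [e1, e2]
  have hKw : 0 ≤ K2 * (a - Real.log 2)^2 := mul_nonneg hK2 (sq_nonneg _)
  have hc1 : 4*K1 ≤ 4*K1 + 8*K2*(1+2*(a - Real.log 2)^2) + 16*K2 + 1 := by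
    linarith
  have hc2 : 8*K2*(1+2*(a - Real.log 2)^2) ≤ 4*K1 + 8*K2*(1+2*(a - Real.log 2)^2) + 16*K2 + 1 := by
    linarith
  have hc3 : 16*K2 ≤ 4*K1 + 8*K2*(1+2*(a - Real.log 2)^2) + 16*K2 + 1 := by
    linarith
  linarith [tb, h2M, mul_nonneg (sub_nonneg.mpr hc1) hp0,
    mul_nonneg (sub_nonneg.mpr hc2) hq0, mul_nonneg (sub_nonneg.mpr hc3) hr0]
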